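/- For any nonzero ν ∈ R^{2n}, the symbol sequence 0 → S+ →^{σ_0} C²⊗S− →^{σ_1} C²⊗S+ →^{σ_2} S− → 0 is exact, where σ_0(ν)η = (ν_0 η, ν_1 η), σ_1(ν)(ξ_0, ξ_1) = (ν_0 ν_0 ξ_1 - ν_1 ν_0 ξ_0, ν_0 ν_1 ξ_1 - ν_1 ν_1 ξ_0), and σ_2(ν)(ζ_0, ζ_1) = ν_0 ζ_1 - ν_1 ζ_0. In particular the Dirac complex of two vector variables is elliptic. -/

import Mathlib

noncomputable section

variable {n : ℕ} {Sp Sm : Type*}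
  [AddCommGroup Sp] [Module ℂ Sp] [AddCommGroup Sm] [Module ℂ Sm]

/-- The symbol `ν_A = -i Σ_j γ_j ν_{Aj}` (on `S⁺`, valued in `S⁻`). -/
def nuP (γp : Fin n → Sp →ₗ[ℂ] Sm) (ν : Fin 2 × Fin n → ℝ) (A : Fin 2) (x : Sp) : Sm :=
  (-Complex.I) • ∑ j, ((ν (A, j) : ℂ) • γp j x)

/-- The symbol `ν_A = -i Σ_j γ_j ν_{Aj}` (on `S⁻`, valued in `S⁺`). -/
def nuM (γm : Fin n → Sm →ₗ[ℂ] Sp) (ν : Fin 2 × Fin n → ℝ) (A : Fin 2) (y : Sm) : Sp :=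
  (-Complex.I) • ∑ j, ((ν (A, j) : ℂ) • γm j y)

/-- The Clifford relations `γ_j γ_k + γ_k γ_j = -2 δ_{jk}` for gamma matrices `γ_j : S± → S∓`. -/
def CliffordRelPM (γp : Fin n → Sp →ₗ[ℂ] Sm) (γm : Fin n → Sm →ₗ[ℂ] Sp) : Prop :=
  (∀ j k : Fin n, ∀ x : Sp,
      γm j (γp k x) + γm k (γp j x) = if j = k then (-2 : ℂ) • x else 0) ∧
  (∀ j k : Fin n, ∀ y : Sm,
      γp j (γm k y) + γp k (γm j y) = if j = k then (-2 : ℂ) • y else 0)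

/-- The symbol `σ_0(ν) η = (ν_0 η, ν_1 η)`. -/
def sigma0 (γp : Fin n → Sp →ₗ[ℂ] Sm) (ν : Fin 2 × Fin n → ℝ) (η : Sp) : Sm × Sm :=
  (nuP γp ν 0 η, nuP γp ν 1 η)

/-- The symbol `σ_1(ν)(ξ_0, ξ_1) = (ν_0 ν_0 ξ_1 - ν_1 ν_0 ξ_0, ν_0 ν_1 ξ_1 - ν_1 ν_1 ξ_0)`. -/
def sigma1 (γp : Fin n → Sp →ₗ[ℂ] Sm) (γm : Fin n → Sm →ₗ[ℂ] Sp)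
    (ν : Fin 2 × Fin n → ℝ) (ξ : Sm × Sm) : Sm × Sm :=
  (nuP γp ν 0 (nuM γm ν 0 ξ.2) - nuP γp ν 1 (nuM γm ν 0 ξ.1),
   nuP γp ν 0 (nuM γm ν 1 ξ.2) - nuP γp ν 1 (nuM γm ν 1 ξ.1))

/-- The symbol `σ_2(ν)(ζ_0, ζ_1) = ν_0 ζ_1 - ν_1 ζ_0`. -/
def sigma2 (γm : Fin n → Sm →ₗ[ℂ] Sp) (ν : Fin 2 × Fin n → ℝ) (ζ : Sm × Sm) : Sp :=
  nuM γm ν 0 ζ.2 - nuM γm ν 1 ζ.1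

/-! ### Auxiliary lemmas -/

/-- `nuP` as a linear map. -/
def nuPL (γp : Fin n → Sp →ₗ[ℂ] Sm) (ν : Fin 2 × Fin n → ℝ) (A : Fin 2) : Sp →ₗ[ℂ] Sm :=
  (-Complex.I) • ∑ j, ((ν (A, j) : ℂ) • γp j)

/-- `nuM` as a linear map. -/
def nuML (γm : Fin n → Sm →ₗ[ℂ] Sp) (ν : Fin 2 × Fin n → ℝ) (A : Fin 2) : Sm →ₗ[ℂ] Sp :=
  (-Complex.I) • ∑ j, ((ν (A, j) : ℂ) • γm j)

lemma nuP_eq (γp : Fin n → Sp →ₗ[ℂ] Sm) (ν : Fin 2 × Fin n → ℝ) (A : Fin 2) :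
    nuP γp ν A = ⇑(nuPL γp ν A) := by
  funext x
  simp [nuP, nuPL, LinearMap.sum_apply]

lemma nuM_eq (γm : Fin n → Sm →ₗ[ℂ] Sp) (ν : Fin 2 × Fin n → ℝ) (A : Fin 2) :
    nuM γm ν A = ⇑(nuML γm ν A) := by
  funext y
  simp [nuM, nuML, LinearMap.sum_apply]

lemma nuM_nuP_expand (γp : Fin n → Sp →ₗ[ℂ] Sm) (γm : Fin n → Sm →ₗ[ℂ] Sp)
    (ν : Fin 2 × Fin n → ℝ) (A B : Fin 2) (x : Sp) :
    nuM γm ν A (nuP γp ν B x)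
      = ∑ j, ∑ k, (-((ν (A, j) : ℂ) * (ν (B, k) : ℂ))) • γm j (γp k x) := by
  simp only [nuM, nuP, map_smul, map_sum, Finset.smul_sum, smul_smul]
  refine Finset.sum_congr rfl fun j _ => Finset.sum_congr rfl fun k _ => ?_
  congr 1
  ring_nf
  simp [Complex.I_sq]

lemma nuP_nuM_expand (γp : Fin n → Sp →ₗ[ℂ] Sm) (γm : Fin n → Sm →ₗ[ℂ] Sp)
    (ν : Fin 2 × Fin n → ℝ) (A B : Fin 2) (y : Sm) :
    nuP γp ν A (nuM γm ν B y)
      = ∑ j, ∑ k, (-((ν (A, j) : ℂ) * (ν (B, k) : ℂ))) • γp j (γm k y) := by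
  simp only [nuM, nuP, map_smul, map_sum, Finset.smul_sum, smul_smul]
  refine Finset.sum_congr rfl fun j _ => Finset.sum_congr rfl fun k _ => ?_
  congr 1
  ring_nf
  simp [Complex.I_sq]

lemma pair_sum' {V : Type*} [AddCommGroup V] [Module ℂ V]
    (c d : Fin n → ℂ) (G : Fin n → Fin n → V) (E : V)
    (hG : ∀ j k, G j k + G k j = if j = k then E else 0) :
    ((∑ j, ∑ k, (-(c j * d k)) • G j k) + ∑ j, ∑ k, (-(d j * c k)) • G j k)
      = (∑ j, c j * d j) • (-E) := by
  rw [Finset.sum_comm (s := Finset.univ) (t := Finset.univ)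
    (f := fun j k => (-(d j * c k)) • G j k)]
  rw [← Finset.sum_add_distrib]
  have key : ∀ j : Fin n, ((∑ k, (-(c j * d k)) • G j k) + ∑ k, (-(d k * c j)) • G k j)
      = (c j * d j) • (-E) := by
    intro j
    rw [← Finset.sum_add_distrib]
    have h1 : ∀ k : Fin n, (-(c j * d k)) • G j k + (-(d k * c j)) • G k j
        = if j = k then (c j * d k) • (-E) else 0 := by
      intro k
      rw [mul_comm (d k) (c j), ← smul_add, hG j k]
      split_ifs <;> simp
    simp only [h1]
    simp [Finset.sum_ite_eq]
  simp only [key, ← Finset.sum_smul]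

lemma key_MP (γp : Fin n → Sp →ₗ[ℂ] Sm) (γm : Fin n → Sm →ₗ[ℂ] Sp)
    (ν : Fin 2 × Fin n → ℝ)
    (h : ∀ j k : Fin n, ∀ x : Sp,
      γm j (γp k x) + γm k (γp j x) = if j = k then (-2 : ℂ) • x else 0)
    (A B : Fin 2) (x : Sp) :
    nuM γm ν A (nuP γp ν B x) + nuM γm ν B (nuP γp ν A x)
      = (2 * ∑ j, (ν (A, j) : ℂ) * (ν (B, j) : ℂ)) • x := by
  rw [nuM_nuP_expand, nuM_nuP_expand,
    pair_sum' (fun j => (ν (A, j) : ℂ)) (fun j => (ν (B, j) : ℂ))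
      (fun j k => γm j (γp k x)) ((-2 : ℂ) • x) (fun j k => h j k x)]
  module

lemma key_PM (γp : Fin n → Sp →ₗ[ℂ] Sm) (γm : Fin n → Sm →ₗ[ℂ] Sp)
    (ν : Fin 2 × Fin n → ℝ)
    (h : ∀ j k : Fin n, ∀ y : Sm,
      γp j (γm k y) + γp k (γm j y) = if j = k then (-2 : ℂ) • y else 0)
    (A B : Fin 2) (y : Sm) :
    nuP γp ν A (nuM γm ν B y) + nuP γp ν B (nuM γm ν A y)
      = (2 * ∑ j, (ν (A, j) : ℂ) * (ν (B, j) : ℂ)) • y := by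
  rw [nuP_nuM_expand, nuP_nuM_expand,
    pair_sum' (fun j => (ν (A, j) : ℂ)) (fun j => (ν (B, j) : ℂ))
      (fun j k => γp j (γm k y)) ((-2 : ℂ) • y) (fun j k => h j k y)]
  module

/-- For any nonzero `ν ∈ ℝ^{2n}`, the symbol sequence
`0 → S⁺ →^{σ_0} ℂ²⊗S∓ →^{σ_1} ℂ²⊗S∓ →^{σ_2} S∓ → 0` is exact: `σ_0` is injective,
`ker σ_1 = Im σ_0`, `ker σ_2 = Im σ_1`, and `σ_2` is surjective.  In particular the
Dirac complex of two vector variables is elliptic. -/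
theorem stmt9 (γp : Fin n → Sp →ₗ[ℂ] Sm) (γm : Fin n → Sm →ₗ[ℂ] Sp)
    (hγ : CliffordRelPM γp γm) (ν : Fin 2 × Fin n → ℝ) (hν : ν ≠ 0) :
    Function.Injective (sigma0 γp ν) ∧
    (∀ ξ : Sm × Sm, sigma1 γp γm ν ξ = 0 ↔ ∃ η : Sp, sigma0 γp ν η = ξ) ∧
    (∀ ζ : Sm × Sm, sigma2 γm ν ζ = 0 ↔ ∃ ξ : Sm × Sm, sigma1 γp γm ν ξ = ζ) ∧
    Function.Surjective (sigma2 γm ν) := by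
  obtain ⟨h1, h2⟩ := hγ
  -- linearity of nuP / nuM in the vector argument
  have Padd : ∀ (A : Fin 2) (x y : Sp),
      nuP γp ν A (x + y) = nuP γp ν A x + nuP γp ν A y := by
    intro A x y; rw [nuP_eq]; exact map_add _ _ _
  have Psub : ∀ (A : Fin 2) (x y : Sp),
      nuP γp ν A (x - y) = nuP γp ν A x - nuP γp ν A y := by
    intro A x y; rw [nuP_eq]; exact map_sub _ _ _
  have Psmul : ∀ (A : Fin 2) (r : ℂ) (x : Sp),
      nuP γp ν A (r • x) = r • nuP γp ν A x := by
    intro A r x; rw [nuP_eq]; exact map_smul _ _ _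
  have Madd : ∀ (A : Fin 2) (x y : Sm),
      nuM γm ν A (x + y) = nuM γm ν A x + nuM γm ν A y := by
    intro A x y; rw [nuM_eq]; exact map_add _ _ _
  have Msub : ∀ (A : Fin 2) (x y : Sm),
      nuM γm ν A (x - y) = nuM γm ν A x - nuM γm ν A y := by
    intro A x y; rw [nuM_eq]; exact map_sub _ _ _
  have Msmul : ∀ (A : Fin 2) (r : ℂ) (x : Sm),
      nuM γm ν A (r • x) = r • nuM γm ν A x := by
    intro A r x; rw [nuM_eq]; exact map_smul _ _ _
  -- the scalars
  set c00 : ℂ := ∑ j, (ν (0, j) : ℂ) * (ν (0, j) : ℂ) with hc00def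
  set c11 : ℂ := ∑ j, (ν (1, j) : ℂ) * (ν (1, j) : ℂ) with hc11def
  set c01 : ℂ := ∑ j, (ν (0, j) : ℂ) * (ν (1, j) : ℂ) with hc01def
  have hc00R : c00 = ((∑ j, (ν (0, j)) ^ 2 : ℝ) : ℂ) := by
    rw [hc00def]; push_cast; refine Finset.sum_congr rfl fun j _ => ?_; ring
  have hc11R : c11 = ((∑ j, (ν (1, j)) ^ 2 : ℝ) : ℂ) := by
    rw [hc11def]; push_cast; refine Finset.sum_congr rfl fun j _ => ?_; ring
  -- nondegeneracy of the scalars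
  have haR : (0 : ℝ) ≤ ∑ j, (ν (0, j)) ^ 2 :=
    Finset.sum_nonneg fun j _ => sq_nonneg _
  have hbR : (0 : ℝ) ≤ ∑ j, (ν (1, j)) ^ 2 :=
    Finset.sum_nonneg fun j _ => sq_nonneg _
  have habR : (∑ j, (ν (0, j)) ^ 2) + (∑ j, (ν (1, j)) ^ 2) ≠ 0 := by
    intro hab
    apply hν
    funext p
    have hsum : ∑ p : Fin 2 × Fin n, (ν p) ^ 2
        = (∑ j, (ν (0, j)) ^ 2) + (∑ j, (ν (1, j)) ^ 2) := by
      rw [Fintype.sum_prod_type, Fin.sum_univ_two]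
    have h0 : ∑ p : Fin 2 × Fin n, (ν p) ^ 2 = 0 := by rw [hsum, hab]
    have := (Finset.sum_eq_zero_iff_of_nonneg
      (fun p _ => sq_nonneg (ν p))).mp h0 p (Finset.mem_univ p)
    exact pow_eq_zero_iff (two_ne_zero) |>.mp this
  have hs : c00 + c11 ≠ 0 := by
    rw [hc00R, hc11R]
    exact_mod_cast fun h => habR (by exact_mod_cast h)
  have hs2 : c00 ^ 2 + c11 ^ 2 ≠ 0 := by
    rw [hc00R, hc11R]
    have : (∑ j, (ν (0, j)) ^ 2) ^ 2 + (∑ j, (ν (1, j)) ^ 2) ^ 2 ≠ 0 := by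
      intro h
      obtain ⟨h0, h0'⟩ := (add_eq_zero_iff_of_nonneg (sq_nonneg _) (sq_nonneg _)).mp h
      exact habR (by rw [pow_eq_zero_iff two_ne_zero |>.mp h0,
        pow_eq_zero_iff two_ne_zero |>.mp h0', add_zero])
    exact_mod_cast fun h => this (by exact_mod_cast h)
  -- diagonal relations
  have hdMP : ∀ x : Sp, nuM γm ν 0 (nuP γp ν 0 x) = c00 • x := by
    intro x
    have h := key_MP γp γm ν h1 0 0 x
    have h' : (2 : ℂ) • nuM γm ν 0 (nuP γp ν 0 x) = (2 : ℂ) • (c00 • x) := by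
      rw [two_smul, h, ← hc00def]; module
    exact smul_right_injective _ two_ne_zero h'
  have hdMP1 : ∀ x : Sp, nuM γm ν 1 (nuP γp ν 1 x) = c11 • x := by
    intro x
    have h := key_MP γp γm ν h1 1 1 x
    have h' : (2 : ℂ) • nuM γm ν 1 (nuP γp ν 1 x) = (2 : ℂ) • (c11 • x) := by
      rw [two_smul, h, ← hc11def]; module
    exact smul_right_injective _ two_ne_zero h'
  have hdPM : ∀ y : Sm, nuP γp ν 0 (nuM γm ν 0 y) = c00 • y := by
    intro y
    have h := key_PM γp γm ν h2 0 0 y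
    have h' : (2 : ℂ) • nuP γp ν 0 (nuM γm ν 0 y) = (2 : ℂ) • (c00 • y) := by
      rw [two_smul, h, ← hc00def]; module
    exact smul_right_injective _ two_ne_zero h'
  have hdPM1 : ∀ y : Sm, nuP γp ν 1 (nuM γm ν 1 y) = c11 • y := by
    intro y
    have h := key_PM γp γm ν h2 1 1 y
    have h' : (2 : ℂ) • nuP γp ν 1 (nuM γm ν 1 y) = (2 : ℂ) • (c11 • y) := by
      rw [two_smul, h, ← hc11def]; module
    exact smul_right_injective _ two_ne_zero h'
  -- cross relations
  have hxMP : ∀ x : Sp, nuM γm ν 0 (nuP γp ν 1 x) + nuM γm ν 1 (nuP γp ν 0 x)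
      = (2 * c01) • x := fun x => key_MP γp γm ν h1 0 1 x
  have hxPM : ∀ y : Sm, nuP γp ν 0 (nuM γm ν 1 y) + nuP γp ν 1 (nuM γm ν 0 y)
      = (2 * c01) • y := fun y => key_PM γp γm ν h2 0 1 y
  refine ⟨?_, ?_, ?_, ?_⟩
  · -- injectivity of σ₀
    intro η η' hE
    have e0 : nuP γp ν 0 η = nuP γp ν 0 η' := congrArg Prod.fst hE
    have e1 : nuP γp ν 1 η = nuP γp ν 1 η' := congrArg Prod.snd hE
    have f0 : c00 • η = c00 • η' := by rw [← hdMP η, ← hdMP η', e0]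
    have f1 : c11 • η = c11 • η' := by rw [← hdMP1 η, ← hdMP1 η', e1]
    have : (c00 + c11) • η = (c00 + c11) • η' := by
      rw [add_smul, add_smul, f0, f1]
    exact smul_right_injective _ hs this
  · -- exactness at the first middle spot
    intro ξ
    constructor
    · intro h
      have h0 : nuP γp ν 0 (nuM γm ν 0 ξ.2) = nuP γp ν 1 (nuM γm ν 0 ξ.1) := by
        have := congrArg Prod.fst h
        simpa [sigma1, sub_eq_zero] using this
      have h1' : nuP γp ν 0 (nuM γm ν 1 ξ.2) = nuP γp ν 1 (nuM γm ν 1 ξ.1) := by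
        have := congrArg Prod.snd h
        simpa [sigma1, sub_eq_zero] using this
      refine ⟨(c00 + c11)⁻¹ • (nuM γm ν 0 ξ.1 + nuM γm ν 1 ξ.2), ?_⟩
      have comp1 : nuP γp ν 0 ((c00 + c11)⁻¹ • (nuM γm ν 0 ξ.1 + nuM γm ν 1 ξ.2))
          = ξ.1 := by
        rw [Psmul, Padd, hdPM, h1', hdPM1, ← add_smul, smul_smul,
          inv_mul_cancel₀ hs, one_smul]
      have comp2 : nuP γp ν 1 ((c00 + c11)⁻¹ • (nuM γm ν 0 ξ.1 + nuM γm ν 1 ξ.2))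
          = ξ.2 := by
        rw [Psmul, Padd, ← h0, hdPM1, hdPM, ← add_smul, smul_smul,
          inv_mul_cancel₀ hs, one_smul]
      rw [sigma0, comp1, comp2]
    · rintro ⟨η, rfl⟩
      rw [sigma1, sigma0]
      have e2 : nuM γm ν 0 (nuP γp ν 1 η)
          = (2 * c01) • η - nuM γm ν 1 (nuP γp ν 0 η) :=
        eq_sub_iff_add_eq.mpr (hxMP η)
      have e3 : nuP γp ν 0 (nuM γm ν 1 (nuP γp ν 0 η))
          = (2 * c01) • nuP γp ν 0 η - nuP γp ν 1 (nuM γm ν 0 (nuP γp ν 0 η)) :=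
        eq_sub_iff_add_eq.mpr (hxPM (nuP γp ν 0 η))
      have e4 : nuM γm ν 1 (nuP γp ν 0 η)
          = (2 * c01) • η - nuM γm ν 0 (nuP γp ν 1 η) := by
        rw [eq_sub_iff_add_eq, add_comm]; exact hxMP η
      have e5 : nuP γp ν 1 (nuM γm ν 0 (nuP γp ν 1 η))
          = (2 * c01) • nuP γp ν 1 η - nuP γp ν 0 (nuM γm ν 1 (nuP γp ν 1 η)) := by
        rw [eq_sub_iff_add_eq, add_comm]; exact hxPM (nuP γp ν 1 η)
      have c1 : nuP γp ν 0 (nuM γm ν 0 (nuP γp ν 1 η))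
          - nuP γp ν 1 (nuM γm ν 0 (nuP γp ν 0 η)) = 0 := by
        simp only [e2, e3, hdMP, Psub, Psmul]
        abel
      have c2 : nuP γp ν 0 (nuM γm ν 1 (nuP γp ν 1 η))
          - nuP γp ν 1 (nuM γm ν 1 (nuP γp ν 0 η)) = 0 := by
        simp only [e4, e5, hdMP1, Psub, Psmul]
        abel
      rw [c1, c2]
      rfl
  · -- exactness at the second middle spot
    intro ζ
    constructor
    · intro h
      have h' : nuM γm ν 0 ζ.2 = nuM γm ν 1 ζ.1 := by
        rw [sigma2] at h; exact sub_eq_zero.mp h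
      refine ⟨((-c11 / (c00 ^ 2 + c11 ^ 2)) • ζ.2,
        (c00 / (c00 ^ 2 + c11 ^ 2)) • ζ.1), ?_⟩
      have hscal : c00 / (c00 ^ 2 + c11 ^ 2) * c00
          - -c11 / (c00 ^ 2 + c11 ^ 2) * c11 = 1 := by
        field_simp
        ring
      have comp1 : nuP γp ν 0 (nuM γm ν 0 ((c00 / (c00 ^ 2 + c11 ^ 2)) • ζ.1))
          - nuP γp ν 1 (nuM γm ν 0 ((-c11 / (c00 ^ 2 + c11 ^ 2)) • ζ.2)) = ζ.1 := by
        simp only [Msmul, Psmul, h', hdPM, hdPM1, smul_smul]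
        rw [← sub_smul, hscal, one_smul]
      have comp2 : nuP γp ν 0 (nuM γm ν 1 ((c00 / (c00 ^ 2 + c11 ^ 2)) • ζ.1))
          - nuP γp ν 1 (nuM γm ν 1 ((-c11 / (c00 ^ 2 + c11 ^ 2)) • ζ.2)) = ζ.2 := by
        simp only [Msmul, Psmul]
        rw [← h']
        simp only [hdPM, hdPM1, smul_smul]
        rw [← sub_smul, hscal, one_smul]
      rw [sigma1]
      exact Prod.ext comp1 comp2
    · rintro ⟨ξ, rfl⟩
      rw [sigma2, sigma1]
      simp only
      rw [Msub, Msub]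
      have t1 : nuM γm ν 0 (nuP γp ν 0 (nuM γm ν 1 ξ.2))
          = c00 • nuM γm ν 1 ξ.2 := hdMP _
      have e6 : nuP γp ν 0 (nuM γm ν 1 ξ.1)
          = (2 * c01) • ξ.1 - nuP γp ν 1 (nuM γm ν 0 ξ.1) :=
        eq_sub_iff_add_eq.mpr (hxPM ξ.1)
      have e7 : nuM γm ν 0 (nuP γp ν 1 (nuM γm ν 1 ξ.1))
          = (2 * c01) • nuM γm ν 1 ξ.1 - nuM γm ν 1 (nuP γp ν 0 (nuM γm ν 1 ξ.1)) :=
        eq_sub_iff_add_eq.mpr (hxMP (nuM γm ν 1 ξ.1))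
      have t2 : nuM γm ν 0 (nuP γp ν 1 (nuM γm ν 1 ξ.1))
          = c11 • nuM γm ν 0 ξ.1 := by
        simp only [e7, e6, Msub, Msmul, hdMP1]
        abel
      have t3 : nuM γm ν 1 (nuP γp ν 0 (nuM γm ν 0 ξ.2))
          = c00 • nuM γm ν 1 ξ.2 := by
        rw [hdPM, Msmul]
      have t4 : nuM γm ν 1 (nuP γp ν 1 (nuM γm ν 0 ξ.1))
          = c11 • nuM γm ν 0 ξ.1 := hdMP1 _
      rw [t1, t2, t3, t4]
      abel
  · -- surjectivity of σ₂
    intro x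
    refine ⟨((-(c00 + c11)⁻¹) • nuP γp ν 1 x, (c00 + c11)⁻¹ • nuP γp ν 0 x), ?_⟩
    rw [sigma2]
    simp only
    have hfin : (c00 + c11)⁻¹ * c00 - -(c00 + c11)⁻¹ * c11 = 1 := by
      field_simp
      ring
    simp only [Msmul, hdMP, hdMP1, smul_smul]
    rw [← sub_smul, hfin, one_smul]
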